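/- Let p, w, x, y, z be points of ℝ³ with w, x, y, z all distinct from p, let t > 0, and let ρ = EuclideanGeometry.inversion p t. Then the four image points ρ(w), ρ(x), ρ(y), ρ(z) are collinear if and only if the five points {p, w, x, y, z} are concyclic (i.e. simultaneously cospherical and coplanar, lying on a common round circle) or collinear. -/

import Mathlib

open EuclideanGeometry RealInnerProductSpace Module

private lemma aux_norm_iff {E : Type*} [NormedAddCommGroup E] [InnerProductSpace ℝ E]
    (v c : E) : ‖v - c‖ = ‖c‖ ↔ ‖v‖ ^ 2 = 2 * ⟪v, c⟫ := by
  have h1 : ‖v - c‖ = ‖c‖ ↔ ‖v - c‖ ^ 2 = ‖c‖ ^ 2 := by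
    constructor
    · intro h; rw [h]
    · intro h
      have h2 := (sq_eq_sq_iff_abs_eq_abs _ _).1 h
      rwa [abs_of_nonneg (norm_nonneg _), abs_of_nonneg (norm_nonneg _)] at h2
  rw [h1, norm_sub_sq_real]
  constructor <;> intro h <;> linarith

private lemma aux_inner_iff {E : Type*} [NormedAddCommGroup E] [InnerProductSpace ℝ E]
    {t : ℝ} (ht : t ≠ 0) {v : E} (hv : v ≠ 0) (c : E) :
    ⟪(t ^ 2 / ‖v‖ ^ 2) • v, c⟫ = t ^ 2 / 2 ↔ ‖v‖ ^ 2 = 2 * ⟪v, c⟫ := by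
  have h1 : ‖v‖ ^ 2 ≠ 0 := pow_ne_zero _ (norm_ne_zero_iff.2 hv)
  have h2 : t ^ 2 ≠ 0 := pow_ne_zero _ ht
  rw [real_inner_smul_left]
  constructor <;> intro h
  · have h3 : t ^ 2 * ⟪v, c⟫ * 2 = t ^ 2 * ‖v‖ ^ 2 := by
      field_simp at h; linear_combination t ^ 2 * h
    have := mul_left_cancel₀ h2 (show t ^ 2 * (⟪v, c⟫ * 2) = t ^ 2 * ‖v‖ ^ 2 by linarith)
    linarith
  · rw [show ⟪v, c⟫ = ‖v‖ ^ 2 / 2 by linarith]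
    field_simp

theorem inversion_images_collinear_iff
    (p w x y z : EuclideanSpace ℝ (Fin 3))
    (hw : w ≠ p) (hx : x ≠ p) (hy : y ≠ p) (hz : z ≠ p)
    (t : ℝ) (ht : 0 < t) :
    Collinear ℝ
        ({EuclideanGeometry.inversion p t w, EuclideanGeometry.inversion p t x,
          EuclideanGeometry.inversion p t y, EuclideanGeometry.inversion p t z} :
          Set (EuclideanSpace ℝ (Fin 3))) ↔
      EuclideanGeometry.Concyclic
          ({p, w, x, y, z} : Set (EuclideanSpace ℝ (Fin 3))) ∨
        Collinear ℝ ({p, w, x, y, z} : Set (EuclideanSpace ℝ (Fin 3))) := by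
  have ht' : t ≠ 0 := ht.ne'
  -- basic facts about the inversion
  have himg : ∀ a : EuclideanSpace ℝ (Fin 3),
      EuclideanGeometry.inversion p t a - p = (t ^ 2 / ‖a - p‖ ^ 2) • (a - p) := by
    intro a
    have h := EuclideanGeometry.inversion_vsub_center p t a
    rw [vsub_eq_sub, vsub_eq_sub, dist_eq_norm, div_pow] at h
    exact h
  have hinv : ∀ a : EuclideanSpace ℝ (Fin 3),
      a - p = (t ^ 2 / ‖EuclideanGeometry.inversion p t a - p‖ ^ 2) •
        (EuclideanGeometry.inversion p t a - p) := by
    intro a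
    have h := himg (EuclideanGeometry.inversion p t a)
    rwa [EuclideanGeometry.inversion_inversion p ht' a] at h
  have hne4 : ∀ b ∈ ({w, x, y, z} : Set (EuclideanSpace ℝ (Fin 3))), b ≠ p := by
    intro b hb
    rcases hb with h | h | h | h <;> subst h <;> assumption
  have hmem4 : ∀ b ∈ ({w, x, y, z} : Set (EuclideanSpace ℝ (Fin 3))),
      EuclideanGeometry.inversion p t b ∈
        ({EuclideanGeometry.inversion p t w, EuclideanGeometry.inversion p t x,
          EuclideanGeometry.inversion p t y, EuclideanGeometry.inversion p t z} :
          Set (EuclideanSpace ℝ (Fin 3))) := by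
    intro b hb
    rcases hb with h | h | h | h <;> subst h <;> simp [Set.mem_insert_iff]
  have hS4 : ∀ q ∈ ({EuclideanGeometry.inversion p t w, EuclideanGeometry.inversion p t x,
          EuclideanGeometry.inversion p t y, EuclideanGeometry.inversion p t z} :
          Set (EuclideanSpace ℝ (Fin 3))),
      ∃ b ∈ ({w, x, y, z} : Set (EuclideanSpace ℝ (Fin 3))), q = EuclideanGeometry.inversion p t b := by
    intro q hq
    rcases hq with h | h | h | h <;>
      exact ⟨_, by simp [Set.mem_insert_iff], h⟩
  constructor
  · intro hcol
    by_cases hline : Collinear ℝ ({p, w, x, y, z} : Set (EuclideanSpace ℝ (Fin 3)))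
    · exact Or.inr hline
    left
    obtain ⟨d, hd⟩ := (collinear_iff_of_mem (Set.mem_insert _ _)).1 hcol
    set a : EuclideanSpace ℝ (Fin 3) := EuclideanGeometry.inversion p t w - p with ha
    have hq : ∀ b ∈ ({w, x, y, z} : Set (EuclideanSpace ℝ (Fin 3))),
        ∃ r : ℝ, EuclideanGeometry.inversion p t b - p = r • d + a := by
      intro b hb
      obtain ⟨r, hr⟩ := hd (EuclideanGeometry.inversion p t b) (hmem4 b hb)
      refine ⟨r, ?_⟩
      rw [hr, ha, vadd_eq_add]
      abel
    set k : ℝ := ⟪a, d⟫ / ⟪d, d⟫ with hk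
    set u : EuclideanSpace ℝ (Fin 3) := a - k • d with hudef
    have hdu : ⟪d, u⟫ = 0 := by
      rcases eq_or_ne d 0 with h | h
      · simp [hudef, h]
      · have hdd : ⟪d, d⟫ ≠ 0 := by
          rw [real_inner_self_eq_norm_sq]
          exact pow_ne_zero _ (norm_ne_zero_iff.2 h)
        rw [hudef, inner_sub_right, real_inner_smul_right, hk,
          div_mul_cancel₀ _ hdd, real_inner_comm, sub_self]
    have hau : ⟪a, u⟫ = ‖u‖ ^ 2 := by
      rw [← real_inner_self_eq_norm_sq]
      have h0 : ⟪a - u, u⟫ = 0 := by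
        rw [show a - u = k • d by rw [hudef]; abel, real_inner_smul_left, hdu, mul_zero]
      have h2 : ⟪a - u, u⟫ = ⟪a, u⟫ - ⟪u, u⟫ := inner_sub_left a u u
      rw [h0] at h2
      linarith
    have hu0 : u ≠ 0 := by
      intro h0
      apply hline
      have hak : a = k • d := by
        have := congrArg (· + k • d) (hudef ▸ h0 : a - k • d = 0)
        simpa using this
      rw [collinear_iff_of_mem (Set.mem_insert p _)]
      refine ⟨d, ?_⟩
      intro q hq5
      rcases hq5 with h | h
      · exact ⟨0, by simp [h]⟩
      · obtain ⟨r, hr⟩ := hq q h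
        have h3 : EuclideanGeometry.inversion p t q - p = (r + k) • d := by
          rw [hr, hak, add_smul]
        have h2 := hinv q
        rw [h3] at h2
        refine ⟨t ^ 2 / ‖(r + k) • d‖ ^ 2 * (r + k), ?_⟩
        rw [vadd_eq_add, ← sub_eq_iff_eq_add, h2, smul_smul]
    set c' : EuclideanSpace ℝ (Fin 3) := (t ^ 2 / (2 * ‖u‖ ^ 2)) • u with hc'
    have hu2 : ‖u‖ ^ 2 ≠ 0 := pow_ne_zero _ (norm_ne_zero_iff.2 hu0)
    have hqc : ∀ b ∈ ({w, x, y, z} : Set (EuclideanSpace ℝ (Fin 3))),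
        ⟪EuclideanGeometry.inversion p t b - p, c'⟫ = t ^ 2 / 2 := by
      intro b hb
      obtain ⟨r, hr⟩ := hq b hb
      rw [hr, inner_add_left, real_inner_smul_left, hc', real_inner_smul_right,
        real_inner_smul_right, hdu, hau, mul_zero, mul_zero, zero_add]
      field_simp
    have hsph : ∀ b ∈ ({w, x, y, z} : Set (EuclideanSpace ℝ (Fin 3))),
        ‖(b - p) - c'‖ = ‖c'‖ := by
      intro b hb
      have hb0 : b - p ≠ 0 := sub_ne_zero.2 (hne4 b hb)
      refine (aux_norm_iff _ _).2 ?_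
      refine (aux_inner_iff ht' hb0 c').1 ?_
      rw [← himg b]
      exact hqc b hb
    constructor
    · -- Cospherical
      refine ⟨p + c', ‖c'‖, ?_⟩
      intro q hq5
      rcases hq5 with h | h
      · subst h; simp [dist_eq_norm]
      · have := hsph q h
        rwa [dist_eq_norm, show q - (p + c') = (q - p) - c' by abel]
    · -- Coplanar
      have hmemspan : ∀ q ∈ ({p, w, x, y, z} : Set (EuclideanSpace ℝ (Fin 3))),
          q - p ∈ Submodule.span ℝ ({a, d} : Set (EuclideanSpace ℝ (Fin 3))) := by
        intro q hq5
        rcases hq5 with h | h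
        · subst h; simp
        · obtain ⟨r, hr⟩ := hq q h
          rw [hinv q, hr]
          refine Submodule.smul_mem _ _ (Submodule.add_mem _ (Submodule.smul_mem _ _ ?_) ?_)
          · exact Submodule.subset_span (by simp)
          · exact Submodule.subset_span (by simp)
      have hvs : vectorSpan ℝ ({p, w, x, y, z} : Set (EuclideanSpace ℝ (Fin 3))) ≤
          Submodule.span ℝ ({a, d} : Set (EuclideanSpace ℝ (Fin 3))) := by
        rw [vectorSpan_def, Submodule.span_le]
        rintro v ⟨q1, hq1, q2, hq2, rfl⟩
        have hv : (fun x1 x2 => x1 -ᵥ x2) q1 q2 = (q1 - p) - (q2 - p) := by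
          show q1 -ᵥ q2 = _
          rw [vsub_eq_sub]
          abel
        rw [hv]
        exact Submodule.sub_mem _ (hmemspan q1 hq1) (hmemspan q2 hq2)
      have hfr : finrank ℝ (Submodule.span ℝ ({a, d} : Set (EuclideanSpace ℝ (Fin 3)))) ≤ 2 := by
        classical
        refine (finrank_span_le_card _).trans ?_
        refine (Finset.card_le_card (by simp [Set.toFinset_insert, Set.toFinset_singleton])).trans
          (Finset.card_insert_le a {d}) |>.trans (by simp)
      rw [coplanar_iff_finrank_le_two]
      exact le_trans (Submodule.finrank_mono hvs) hfr
  · rintro (⟨hcos, hcop⟩ | hline)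
    · obtain ⟨o, r, ho⟩ := hcos
      set c' : EuclideanSpace ℝ (Fin 3) := o - p with hc'
      have hpo : ‖c'‖ = r := by
        have := ho p (by simp)
        rwa [dist_eq_norm, norm_sub_rev] at this
      have hsph : ∀ b ∈ ({w, x, y, z} : Set (EuclideanSpace ℝ (Fin 3))),
          ‖(b - p) - c'‖ = ‖c'‖ := by
        intro b hb
        have h1 : b ∈ ({p, w, x, y, z} : Set (EuclideanSpace ℝ (Fin 3))) :=
          Set.mem_insert_iff.2 (Or.inr hb)
        have := ho b h1
        rw [dist_eq_norm] at this
        rw [show (b - p) - c' = b - o by rw [hc']; abel, this, hpo]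
      have hin : ∀ b ∈ ({w, x, y, z} : Set (EuclideanSpace ℝ (Fin 3))),
          ⟪EuclideanGeometry.inversion p t b - p, c'⟫ = t ^ 2 / 2 := by
        intro b hb
        have hb0 : b - p ≠ 0 := sub_ne_zero.2 (hne4 b hb)
        rw [himg b]
        exact (aux_inner_iff ht' hb0 c').2 ((aux_norm_iff _ _).1 (hsph b hb))
      -- the plane
      set W := vectorSpan ℝ ({p, w, x, y, z} : Set (EuclideanSpace ℝ (Fin 3))) with hW
      have hWfr : finrank ℝ W ≤ 2 := hcop.finrank_le_two
      set K := W ⊓ (ℝ ∙ c')ᗮ with hK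
      have hvwW : w - p ∈ W := by
        have := vsub_mem_vectorSpan ℝ (Set.mem_insert_iff.2 (Or.inr (by simp)) :
          w ∈ ({p, w, x, y, z} : Set (EuclideanSpace ℝ (Fin 3)))) (Set.mem_insert _ _)
        simpa using this
      have hvwK : w - p ∉ K := by
        intro hmem
        have h2 := (Submodule.mem_inf.1 hmem).2
        rw [Submodule.mem_orthogonal_singleton_iff_inner_right] at h2
        have h3 : ‖w - p‖ ^ 2 = 2 * ⟪w - p, c'⟫ := (aux_norm_iff _ _).1 (hsph w (by simp))
        rw [real_inner_comm] at h2
        rw [h2] at h3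
        simp at h3
        exact sub_ne_zero.2 hw h3
      have hKlt : K < W := lt_of_le_of_ne inf_le_left (fun h => hvwK (h ▸ hvwW))
      have hKfr : finrank ℝ K ≤ 1 := by
        have := Submodule.finrank_lt_finrank_of_lt hKlt
        omega
      have hvs4 : vectorSpan ℝ ({EuclideanGeometry.inversion p t w, EuclideanGeometry.inversion p t x,
          EuclideanGeometry.inversion p t y, EuclideanGeometry.inversion p t z} :
          Set (EuclideanSpace ℝ (Fin 3))) ≤ K := by
        rw [vectorSpan_def, Submodule.span_le]
        rintro v ⟨q1, hq1, q2, hq2, rfl⟩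
        obtain ⟨b1, hb1, rfl⟩ := hS4 q1 hq1
        obtain ⟨b2, hb2, rfl⟩ := hS4 q2 hq2
        have hv : (fun x1 x2 => x1 -ᵥ x2) (EuclideanGeometry.inversion p t b1)
            (EuclideanGeometry.inversion p t b2) = EuclideanGeometry.inversion p t b1 -
            EuclideanGeometry.inversion p t b2 := rfl
        rw [hv]
        have hqW : ∀ b ∈ ({w, x, y, z} : Set (EuclideanSpace ℝ (Fin 3))),
            EuclideanGeometry.inversion p t b - p ∈ W := by
          intro b hb
          rw [himg b]
          refine Submodule.smul_mem _ _ ?_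
          have := vsub_mem_vectorSpan ℝ (Set.mem_insert_iff.2 (Or.inr hb) :
            b ∈ ({p, w, x, y, z} : Set (EuclideanSpace ℝ (Fin 3)))) (Set.mem_insert _ _)
          simpa using this
        refine Submodule.mem_inf.2 ⟨?_, ?_⟩
        · rw [show EuclideanGeometry.inversion p t b1 - EuclideanGeometry.inversion p t b2
            = (EuclideanGeometry.inversion p t b1 - p) - (EuclideanGeometry.inversion p t b2 - p) by abel]
          exact Submodule.sub_mem _ (hqW b1 hb1) (hqW b2 hb2)
        · rw [Submodule.mem_orthogonal_singleton_iff_inner_right, real_inner_comm,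
            show EuclideanGeometry.inversion p t b1 - EuclideanGeometry.inversion p t b2
            = (EuclideanGeometry.inversion p t b1 - p) - (EuclideanGeometry.inversion p t b2 - p) by abel,
            inner_sub_left, hin b1 hb1, hin b2 hb2, sub_self]
      rw [collinear_iff_finrank_le_one]
      exact le_trans (Submodule.finrank_mono hvs4) hKfr
    · -- collinear case
      obtain ⟨d, hd⟩ := (collinear_iff_of_mem (Set.mem_insert p _)).1 hline
      rw [collinear_iff_exists_forall_eq_smul_vadd]
      refine ⟨p, d, ?_⟩
      intro q hq4
      obtain ⟨b, hb, rfl⟩ := hS4 q hq4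
      obtain ⟨r, hr⟩ := hd b (Set.mem_insert_iff.2 (Or.inr hb))
      have hbp : b - p = r • d := by rw [hr, vadd_eq_add]; abel
      refine ⟨t ^ 2 / ‖b - p‖ ^ 2 * r, ?_⟩
      rw [vadd_eq_add, ← sub_eq_iff_eq_add, himg b, hbp, smul_smul]
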